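/- Let X be a real random variable with distribution function F, tail sum H(x) = 1 − F(x) + F(−x), and let U(t) = E[cos(tX)] denote the real part of the characteristic function of X. Then for every t > 0 the improper integral ∫₀^∞ sin(tx) H(x) dx converges (as the limit of ∫₀^M as M → ∞) and satisfies 1 − U(t) = t ∫₀^∞ sin(tx) H(x) dx. -/

import Mathlib

open MeasureTheory Filter Set intervalIntegral


lemma sinInt (t : ℝ) (ht : 0 < t) (c : ℝ) (hc : 0 ≤ c) :
    ∫ x in Set.Ioc (0:ℝ) c, Real.sin (t * x) = (1 - Real.cos (t * c)) / t := by
  rw [← intervalIntegral.integral_of_le hc,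
    intervalIntegral.integral_comp_mul_left (fun x => Real.sin x) ht.ne']
  rw [integral_sin]
  rw [smul_eq_mul]
  field_simp
  simp

lemma innerCalc (t : ℝ) (ht : 0 < t) (M : ℝ) (hM : 0 ≤ M) (y : ℝ) :
    ∫ x in Set.Ioc (0:ℝ) M,
      Real.sin (t * x) * (1 - (if y ≤ x then (1:ℝ) else 0) + (if y ≤ -x then (1:ℝ) else 0))
      = (1 - Real.cos (t * min M |y|)) / t := by
  have hcont : Continuous fun x : ℝ => Real.sin (t * x) :=
    Real.continuous_sin.comp (continuous_const.mul continuous_id)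
  have hint1 : IntegrableOn (fun x : ℝ => Real.sin (t * x)) (Set.Ioc 0 M) :=
    hcont.integrableOn_Ioc
  have hint2 : IntegrableOn (fun x : ℝ => (Set.Ici y).indicator (fun x => Real.sin (t * x)) x)
      (Set.Ioc 0 M) := hint1.indicator measurableSet_Ici
  have hint3 : IntegrableOn (fun x : ℝ => (Set.Iic (-y)).indicator (fun x => Real.sin (t * x)) x)
      (Set.Ioc 0 M) := hint1.indicator measurableSet_Iic
  have h1 : ∀ x : ℝ,
      Real.sin (t * x) * (1 - (if y ≤ x then (1:ℝ) else 0) + (if y ≤ -x then (1:ℝ) else 0))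
        = Real.sin (t * x) - (Set.Ici y).indicator (fun x => Real.sin (t * x)) x
          + (Set.Iic (-y)).indicator (fun x => Real.sin (t * x)) x := by
    intro x
    have hxy : x ∈ Set.Iic (-y) ↔ y ≤ -x := by simp [Set.mem_Iic, le_neg]
    by_cases h : y ≤ x <;> by_cases h2 : y ≤ -x <;>
      simp [Set.indicator_apply, Set.mem_Ici, hxy, h, h2] <;> ring
  simp only [h1]
  have hsub : IntegrableOn (fun x : ℝ => Real.sin (t * x)
      - (Set.Ici y).indicator (fun x => Real.sin (t * x)) x) (Set.Ioc 0 M) := hint1.sub hint2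
  rw [integral_add hsub hint3, integral_sub hint1 hint2]
  rw [setIntegral_indicator measurableSet_Ici, setIntegral_indicator measurableSet_Iic,
    Set.Ioc_inter_Iic]
  rw [sinInt t ht M hM]
  rcases le_or_gt y 0 with hy | hy
  · have hIci : Set.Ioc (0:ℝ) M ∩ Set.Ici y = Set.Ioc 0 M := by
      refine Set.inter_eq_left.mpr fun x hx => ?_
      exact le_trans hy (le_of_lt hx.1)
    rw [hIci, sinInt t ht M hM, sinInt t ht (min M (-y)) (le_min hM (by linarith)),
      abs_of_nonpos hy]
    ring
  · have habs : |y| = y := abs_of_pos hy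
    have hempty3 : Set.Ioc (0:ℝ) (min M (-y)) = ∅ :=
      Set.Ioc_eq_empty (by simp; intro h; linarith [min_le_right M (-y)])
    rcases le_or_gt y M with hyM | hMy
    · have hIci : Set.Ioc (0:ℝ) M ∩ Set.Ici y = Set.Icc y M := by
        ext x
        simp only [Set.mem_inter_iff, Set.mem_Ioc, Set.mem_Ici, Set.mem_Icc]
        exact ⟨fun h => ⟨h.2, h.1.2⟩, fun h => ⟨⟨lt_of_lt_of_le hy h.1, h.2⟩, h.1⟩⟩
      rw [hIci, hempty3, habs, min_eq_right hyM]
      rw [MeasureTheory.integral_Icc_eq_integral_Ioc]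
      have : ∫ x in Set.Ioc y M, Real.sin (t * x) = (Real.cos (t*y) - Real.cos (t*M)) / t := by
        rw [← intervalIntegral.integral_of_le hyM,
          intervalIntegral.integral_comp_mul_left (fun x => Real.sin x) ht.ne', integral_sin]
        rw [smul_eq_mul]; field_simp
      rw [this]
      simp [Measure.restrict_empty]
      ring
    · have hIci : Set.Ioc (0:ℝ) M ∩ Set.Ici y = ∅ := by
        ext x
        simp only [Set.mem_inter_iff, Set.mem_Ioc, Set.mem_Ici, Set.mem_empty_iff_false,
          iff_false, not_and]
        intro h1 h2; linarith [h1.2]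
      rw [hIci, hempty3, habs, min_eq_left (le_of_lt hMy)]
      simp [Measure.restrict_empty]

/-- For a real random variable `X` with distribution function `F`,
tail sum `H(x) = 1 - F(x) + F(-x)` and `U(t) = E[cos (t X)]`, for every `t > 0` the
improper integral `∫₀^∞ sin(tx) H(x) dx` converges (as a limit of `∫₀^M` as `M → ∞`)
and `1 - U(t) = t ∫₀^∞ sin(tx) H(x) dx`. -/
theorem one_sub_real_charFun_eq_integral_tail_sum
    {Ω : Type*} [MeasurableSpace Ω] (μ : Measure Ω) [IsProbabilityMeasure μ]
    (X : Ω → ℝ) (hX : Measurable X)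
    (F : ℝ → ℝ) (hF : ∀ x, F x = (μ {ω | X ω ≤ x}).toReal)
    (H : ℝ → ℝ) (hH : ∀ x, H x = 1 - F x + F (-x))
    (U : ℝ → ℝ) (hU : ∀ t, U t = ∫ ω, Real.cos (t * X ω) ∂μ) :
    ∀ t : ℝ, 0 < t → ∃ I : ℝ,
      Tendsto (fun M : ℝ => ∫ x in (0 : ℝ)..M, Real.sin (t * x) * H x) atTop (nhds I) ∧
      1 - U t = t * I := by
  intro t ht
  classical
  -- the integrand as a function of (x, ω)
  set f : ℝ → Ω → ℝ := fun x ω =>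
    Real.sin (t * x) * (1 - (if X ω ≤ x then (1:ℝ) else 0) + (if X ω ≤ -x then (1:ℝ) else 0))
    with hf
  have hmeas : ∀ x : ℝ, MeasurableSet {ω | X ω ≤ x} := fun x => hX measurableSet_Iic
  have hindInt : ∀ x : ℝ, Integrable (fun ω => if X ω ≤ x then (1:ℝ) else 0) μ := by
    intro x
    refine ((integrable_const (1:ℝ)).indicator (hmeas x)).congr (ae_of_all _ fun ω => ?_)
    simp [Set.indicator_apply]
  have hindVal : ∀ x : ℝ, ∫ ω, (if X ω ≤ x then (1:ℝ) else 0) ∂μ = F x := by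
    intro x
    rw [hF x, ← MeasureTheory.measureReal_def, ← MeasureTheory.integral_indicator_one (hmeas x)]
    refine integral_congr_ae (ae_of_all _ fun ω => ?_)
    simp [Set.indicator_apply]
  -- pointwise identity :  sin(tx) * H x = ∫ ω, f x ω
  have hHx : ∀ x : ℝ, Real.sin (t * x) * H x = ∫ ω, f x ω ∂μ := by
    intro x
    rw [hf]
    rw [MeasureTheory.integral_const_mul]
    congr 1
    rw [hH x]
    have hsub : Integrable (fun ω => 1 - (if X ω ≤ x then (1:ℝ) else 0)) μ :=
      (integrable_const (1:ℝ)).sub (hindInt x)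
    rw [integral_add hsub (hindInt (-x)),
      integral_sub (integrable_const (1:ℝ)) (hindInt x), hindVal x, hindVal (-x)]
    simp
  -- key identity for fixed M ≥ 0, via Fubini
  have key : ∀ M : ℝ, 0 ≤ M → (∫ x in (0:ℝ)..M, Real.sin (t * x) * H x)
      = ∫ ω, (1 - Real.cos (t * min M |X ω|)) / t ∂μ := by
    intro M hM
    haveI : IsFiniteMeasure (volume.restrict (Set.Ioc (0:ℝ) M)) := by
      constructor
      rw [Measure.restrict_apply_univ]
      simp [Real.volume_Ioc]
    have hΦm : Measurable fun p : ℝ × Ω => f p.1 p.2 := by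
      have h1 : MeasurableSet {p : ℝ × Ω | X p.2 ≤ p.1} :=
        measurableSet_le (hX.comp measurable_snd) measurable_fst
      have h2 : MeasurableSet {p : ℝ × Ω | X p.2 ≤ -p.1} :=
        measurableSet_le (hX.comp measurable_snd) measurable_fst.neg
      exact (Real.measurable_sin.comp (measurable_const.mul measurable_fst)).mul
        (((measurable_const.sub (Measurable.ite h1 measurable_const measurable_const)).add
          (Measurable.ite h2 measurable_const measurable_const)))
    have hΦi : Integrable (fun p : ℝ × Ω => f p.1 p.2)
        ((volume.restrict (Set.Ioc (0:ℝ) M)).prod μ) := by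
      refine (integrable_const (3:ℝ)).mono' hΦm.aestronglyMeasurable (ae_of_all _ fun p => ?_)
      rw [hf]
      have h1 : |Real.sin (t * p.1)| ≤ 1 := Real.abs_sin_le_one _
      have h2 : |(1 - (if X p.2 ≤ p.1 then (1:ℝ) else 0) + (if X p.2 ≤ -p.1 then (1:ℝ) else 0))|
          ≤ 3 := by split_ifs <;> norm_num
      calc |Real.sin (t * p.1) * _| = |Real.sin (t * p.1)| * _ := abs_mul _ _
        _ ≤ 1 * 3 := by exact mul_le_mul h1 h2 (abs_nonneg _) zero_le_one
        _ = 3 := by norm_num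
    rw [intervalIntegral.integral_of_le hM]
    calc ∫ x in Set.Ioc (0:ℝ) M, Real.sin (t * x) * H x
        = ∫ x in Set.Ioc (0:ℝ) M, (∫ ω, f x ω ∂μ) := by simp only [hHx]
      _ = ∫ ω, (∫ x in Set.Ioc (0:ℝ) M, f x ω) ∂μ := integral_integral_swap hΦi
      _ = ∫ ω, (1 - Real.cos (t * min M |X ω|)) / t ∂μ := by
          refine integral_congr_ae (ae_of_all _ fun ω => ?_)
          exact innerCalc t ht M hM (X ω)
  -- the limit
  refine ⟨∫ ω, (1 - Real.cos (t * |X ω|)) / t ∂μ, ?_, ?_⟩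
  · have hG : Tendsto (fun M : ℝ => ∫ ω, (1 - Real.cos (t * min M |X ω|)) / t ∂μ) atTop
        (nhds (∫ ω, (1 - Real.cos (t * |X ω|)) / t ∂μ)) := by
      refine tendsto_integral_filter_of_dominated_convergence (fun _ => 2 / t)
        ?_ ?_ (integrable_const _) ?_
      · filter_upwards with M
        exact (((measurable_const.sub (Real.measurable_cos.comp
          (measurable_const.mul (measurable_const.min hX.abs)))).div_const t)).aestronglyMeasurable
      · filter_upwards with M
        refine ae_of_all _ fun ω => ?_
        have h1 := Real.neg_one_le_cos (t * min M |X ω|)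
        have h2 := Real.cos_le_one (t * min M |X ω|)
        rw [Real.norm_eq_abs, abs_div, abs_of_pos ht, abs_of_nonneg (by linarith)]
        gcongr
        linarith
      · refine ae_of_all _ fun ω => ?_
        refine Tendsto.congr' ?_ tendsto_const_nhds
        filter_upwards [eventually_ge_atTop |X ω|] with M hM
        rw [min_eq_right hM]
    refine hG.congr' ?_
    filter_upwards [eventually_ge_atTop (0:ℝ)] with M hM
    exact (key M hM).symm
  · have hcosInt : Integrable (fun ω => Real.cos (t * X ω)) μ := by
      refine (integrable_const (1:ℝ)).mono'
        ((Real.measurable_cos.comp (measurable_const.mul hX)).aestronglyMeasurable)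
        (ae_of_all _ fun ω => Real.abs_cos_le_one _)
    have habs : ∀ ω, Real.cos (t * |X ω|) = Real.cos (t * X ω) := by
      intro ω
      rw [← Real.cos_abs (t * X ω), abs_mul, abs_of_pos ht]
    have : ∫ ω, (1 - Real.cos (t * |X ω|)) / t ∂μ
        = (∫ ω, (1 - Real.cos (t * X ω)) ∂μ) / t := by
      rw [← MeasureTheory.integral_div]
      refine integral_congr_ae (ae_of_all _ fun ω => ?_)
      simp only [habs ω]
    rw [this, hU t, integral_sub (integrable_const (1:ℝ)) hcosInt]
    simp
    field_simp
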